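/- Let R be the interleaved double chain X : ε : Y : ε : X⁻¹ : ε : Y⁻¹ : ε (a root). Then for every k ≥ 0, applying the f₂-lift k times yields f₂ᵏ(R) = X : (YX)ᵏ : Y : ε : X⁻¹ : (Y⁻¹X⁻¹)ᵏ : Y⁻¹ : ε, and for k ≥ 1 the word X Y X⁻¹ Y⁻¹ occurs as a subword of the concatenation of parts 2 through 6 of f₂ᵏ(R). -/
import Mathlib

/-- Letterwise reversal of a word over an alphabet with reversal `inv`. -/
def wrev {A : Type*} (inv : A → A) (W : List A) : List A := (W.map inv).reverse

/-- An interleaved double chain (indices mod 8). -/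
def IDC {A : Type*} (inv : A → A) (U : ZMod 8 → List A) : Prop :=
  ∀ i : ZMod 8, U i ++ U (i + 1) = wrev inv (U (i + 4) ++ U (i + 5))

/-- The `f_k`-lift: for `j ≡ k (mod 4)` replace `U_j` by `(U_{j+3}U_{j+4}U_{j+5})⁻¹`,
and keep the remaining parts. -/
def flift {A : Type*} (inv : A → A) (k : ZMod 8) (U : ZMod 8 → List A) :
    ZMod 8 → List A :=
  fun j =>
    if j = k ∨ j = k + 4 then wrev inv (U (j + 3) ++ U (j + 4) ++ U (j + 5)) else U j

/-- `k`-fold concatenation of a word. -/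
def wpow {A : Type*} (W : List A) (k : ℕ) : List A := (List.replicate k W).flatten

/-- The root `X : ε : Y : ε : X⁻¹ : ε : Y⁻¹ : ε`. -/
def rootChain {A : Type*} (inv : A → A) (X Y : List A) : ZMod 8 → List A :=
  fun i =>
    if i = 1 then X
    else if i = 3 then Y
    else if i = 5 then wrev inv X
    else if i = 7 then wrev inv Y
    else []

lemma wrev_append {A : Type*} (inv : A → A) (a b : List A) :
    wrev inv (a ++ b) = wrev inv b ++ wrev inv a := by simp [wrev]

lemma wrev_wrev {A : Type*} {inv : A → A} (hinv : Function.Involutive inv) (W : List A) :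
    wrev inv (wrev inv W) = W := by
  simp [wrev, List.map_reverse, List.map_map, hinv.comp_self]

lemma wpow_succ {A : Type*} (W : List A) (k : ℕ) :
    wpow W (k+1) = W ++ wpow W k := by simp [wpow, List.replicate_succ]

lemma wpow_succ' {A : Type*} (W : List A) (k : ℕ) :
    wpow W (k+1) = wpow W k ++ W := by
  simp [wpow, List.replicate_succ']

lemma wrev_wpow {A : Type*} (inv : A → A) (W : List A) (k : ℕ) :
    wrev inv (wpow W k) = wpow (wrev inv W) k := by
  induction k with
  | zero => rfl
  | succ n ih => rw [wpow_succ, wrev_append, ih, wpow_succ']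

lemma wpow_shift {A : Type*} (a b : List A) (k : ℕ) :
    wpow (a ++ b) (k+1) = a ++ wpow (b ++ a) k ++ b := by
  induction k with
  | zero => simp [wpow]
  | succ n ih => rw [wpow_succ, ih, wpow_succ]; simp

theorem stmt12 {A : Type*} (inv : A → A) (hinv : Function.Involutive inv)
    (X Y : List A) (k : ℕ) :
    ((flift inv 2)^[k] (rootChain inv X Y) = fun i : ZMod 8 =>
      if i = 1 then X
      else if i = 2 then wpow (Y ++ X) k
      else if i = 3 then Y
      else if i = 5 then wrev inv X
      else if i = 6 then wpow (wrev inv Y ++ wrev inv X) k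
      else if i = 7 then wrev inv Y
      else []) ∧
    (1 ≤ k →
      (X ++ Y ++ wrev inv X ++ wrev inv Y) <:+:
        ((flift inv 2)^[k] (rootChain inv X Y) 2 ++
         (flift inv 2)^[k] (rootChain inv X Y) 3 ++
         (flift inv 2)^[k] (rootChain inv X Y) 4 ++
         (flift inv 2)^[k] (rootChain inv X Y) 5 ++
         (flift inv 2)^[k] (rootChain inv X Y) 6)) := by
  have main : ∀ k : ℕ, (flift inv 2)^[k] (rootChain inv X Y) = fun i : ZMod 8 =>
      if i = 1 then X
      else if i = 2 then wpow (Y ++ X) k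
      else if i = 3 then Y
      else if i = 5 then wrev inv X
      else if i = 6 then wpow (wrev inv Y ++ wrev inv X) k
      else if i = 7 then wrev inv Y
      else [] := by
    intro k
    induction k with
    | zero =>
      funext i
      fin_cases i <;> rfl
    | succ n ih =>
      rw [Function.iterate_succ_apply', ih]
      funext j
      fin_cases j
      · rfl
      · rfl
      · show wrev inv (wrev inv X ++ wpow (wrev inv Y ++ wrev inv X) n ++ wrev inv Y)
            = wpow (Y ++ X) (n+1)
        simp [wrev_append, wrev_wpow, wrev_wrev hinv, wpow_shift]
      · rfl
      · rfl
      · rfl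
      · show wrev inv (X ++ wpow (Y ++ X) n ++ Y)
            = wpow (wrev inv Y ++ wrev inv X) (n+1)
        simp [wrev_append, wrev_wpow, wrev_wrev hinv, wpow_shift]
      · rfl
  refine ⟨main k, ?_⟩
  intro hk
  obtain ⟨m, rfl⟩ : ∃ m, k = m + 1 := ⟨k - 1, by omega⟩
  rw [main]
  show (X ++ Y ++ wrev inv X ++ wrev inv Y) <:+:
    (wpow (Y ++ X) (m+1) ++ Y ++ ([] : List A) ++ wrev inv X ++
      wpow (wrev inv Y ++ wrev inv X) (m+1))
  refine ⟨wpow (Y ++ X) m ++ Y, wrev inv X ++ wpow (wrev inv Y ++ wrev inv X) m, ?_⟩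
  rw [wpow_succ' (Y ++ X), wpow_succ (wrev inv Y ++ wrev inv X)]
  simp
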